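/- Let n ≥ 5 be odd with n ≡ 3 (mod 4), let K/ℚ be Galois with Gal(K/ℚ) ≅ C_n generated by σ, write α_i = σ^i(α). Suppose α ∈ K is an algebraic unit with |α₀| > |α₁| > |α_{-1}| > |α₂| > |α_{-2}| > ... and exactly (n+1)/2 conjugates outside the unit circle. Then β = M(α) has exactly (n+1)/2 or exactly (n-1)/2 conjugates outside the unit circle, and its conjugates satisfy |β₀| > |β_{-1}| > |β₁| > |β_{-2}| > |β₂| > .... -/

import Mathlib

open Polynomial

noncomputable def intMinpoly (α : ℂ) : Polynomial ℤ :=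
  (IsLocalization.integerNormalization (nonZeroDivisors ℤ) (minpoly ℚ α)).primPart

noncomputable def mahlerM (α : ℂ) : ℝ :=
  ((intMinpoly α).leadingCoeff.natAbs : ℝ) *
    (((intMinpoly α).map (Int.castRingHom ℂ)).roots.map (fun z => max 1 ‖z‖)).prod

noncomputable def mahlerC (α : ℂ) : ℂ := (mahlerM α : ℝ)

def TorsionFree (α : ℂ) : Prop :=
  ∀ σ : ℂ ≃ₐ[ℚ] ℂ, σ α ≠ α → ∀ n : ℕ, 0 < n → (α / σ α) ^ n ≠ 1

set_option maxHeartbeats 1000000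
set_option synthInstance.maxHeartbeats 400000
set_option linter.unusedSectionVars false
set_option linter.unusedVariables false
section Aux


lemma intMinpoly_eq (x : ℂ) (hx : IsIntegral ℤ x) :
    ∃ ε : ℤ, (ε = 1 ∨ ε = -1) ∧ intMinpoly x = C ε * minpoly ℤ x := by
  set q := minpoly ℤ x with hq
  have hmono : q.Monic := minpoly.monic hx
  have hp : minpoly ℚ x = q.map (algebraMap ℤ ℚ) :=
    minpoly.isIntegrallyClosed_eq_field_fractions ℚ ℂ hx
  obtain ⟨b, hb⟩ := IsLocalization.integerNormalization_map_to_map (nonZeroDivisors ℤ)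
    (minpoly ℚ x)
  have hb0 : (b : ℤ) ≠ 0 := nonZeroDivisors.coe_ne_zero b
  have hN : IsLocalization.integerNormalization (nonZeroDivisors ℤ) (minpoly ℚ x)
      = C (b : ℤ) * q := by
    apply Polynomial.map_injective (algebraMap ℤ ℚ) (fun a c h => by exact_mod_cast h)
    rw [hb, hp, Polynomial.map_mul, Polynomial.map_C, zsmul_eq_mul]
    simp [Polynomial.C_eq_intCast]
  set P := (C (b:ℤ) * q).primPart with hP
  have hcont : (C (b : ℤ) * q).content = |(b : ℤ)| := by
    rw [Polynomial.content_C_mul,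
      (Polynomial.isPrimitive_iff_content_eq_one.mp hmono.isPrimitive), mul_one,
      Int.abs_eq_normalize]
  have hpp : C (b : ℤ) * q = C |(b : ℤ)| * P := by
    conv_lhs => rw [Polynomial.eq_C_content_mul_primPart (C (b : ℤ) * q)]
    rw [hcont]
  have hIM : intMinpoly x = P := by rw [intMinpoly, hN]
  rcases le_or_gt 0 (b : ℤ) with h | h
  · refine ⟨1, Or.inl rfl, ?_⟩
    rw [abs_of_nonneg h] at hpp
    rw [hIM, map_one, one_mul,
      ← mul_left_cancel₀ (a := (C (b:ℤ))) (by simp [hb0]) hpp]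
  · refine ⟨-1, Or.inr rfl, ?_⟩
    rw [abs_of_neg h] at hpp
    have h2 : C (b:ℤ) * q = C (b:ℤ) * (-P) := by rw [hpp, map_neg]; ring
    have h3 := mul_left_cancel₀ (a := (C (b:ℤ))) (by simp [hb0]) h2
    rw [hIM, show P = -q by rw [h3]; ring, map_neg, map_one]
    ring

lemma mahlerM_eq_roots (x : ℂ) (hx : IsIntegral ℤ x) :
    mahlerM x = (((minpoly ℚ x).map (algebraMap ℚ ℂ)).roots.map (fun z => max 1 ‖z‖)).prod := by
  obtain ⟨ε, hε, hIM⟩ := intMinpoly_eq x hx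
  have hεC : ((ε : ℤ) : ℂ) ≠ 0 := by rcases hε with h | h <;> simp [h]
  have hlc : (intMinpoly x).leadingCoeff.natAbs = 1 := by
    rw [hIM]
    rcases hε with h | h <;>
      simp [h, Polynomial.leadingCoeff_mul, (minpoly.monic hx).leadingCoeff]
  have hmapeq : (intMinpoly x).map (Int.castRingHom ℂ)
      = C ((ε:ℤ):ℂ) * ((minpoly ℚ x).map (algebraMap ℚ ℂ)) := by
    have hp : minpoly ℚ x = (minpoly ℤ x).map (algebraMap ℤ ℚ) :=
      minpoly.isIntegrallyClosed_eq_field_fractions ℚ ℂ hx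
    rw [hIM, Polynomial.map_mul, Polynomial.map_C, hp, Polynomial.map_map]
    rw [RingHom.ext_int ((algebraMap ℚ ℂ).comp (algebraMap ℤ ℚ)) (Int.castRingHom ℂ)]
    norm_num
  rw [mahlerM, hlc, hmapeq, Polynomial.roots_C_mul _ hεC]
  norm_num

section
variable {K : IntermediateField ℚ ℝ} [FiniteDimensional ℚ K] [IsGalois ℚ K]

noncomputable def embC (K : IntermediateField ℚ ℝ) : K →ₐ[ℚ] ℂ :=
  (Complex.ofRealAm.restrictScalars ℚ).comp K.val

lemma embC_apply (x : K) : embC K x = ((x : ℝ) : ℂ) := rfl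

lemma embC_inj : Function.Injective (embC K) := RingHom.injective (embC K).toRingHom

lemma minpoly_embC (α : K) : minpoly ℚ (((α : K) : ℝ) : ℂ) = minpoly ℚ α := by
  rw [← embC_apply]
  exact minpoly.algHom_eq (embC K) embC_inj α

lemma conj_roots {n : ℕ} (hn : 0 < n) (hcard : Nat.card (K ≃ₐ[ℚ] K) = n)
    (σ : K ≃ₐ[ℚ] K) (α : K)
    (hdistinct : Function.Injective (fun i : Fin n => (σ ^ (i : ℕ)) α)) :
    ((minpoly ℚ α).map (algebraMap ℚ ℂ)).roots
      = (Finset.univ : Finset (Fin n)).val.map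
          (fun i : Fin n => ((((σ ^ (i.val)) α : K) : ℝ) : ℂ)) := by
  have hfin : Module.finrank ℚ K = n := by
    rw [← IsGalois.card_aut_eq_finrank, hcard]
  have hα : IsIntegral ℚ α := (IsIntegral.of_finite ℚ α)
  have hp0 : minpoly ℚ α ≠ 0 := minpoly.ne_zero hα
  -- roots over K
  have hroot : ∀ i : Fin n, ((σ ^ (i : ℕ)) α) ∈ ((minpoly ℚ α).map (algebraMap ℚ K)).roots := by
    intro i
    rw [Polynomial.mem_roots_map hp0, ← Polynomial.aeval_def]
    exact minpoly.aeval_algHom ℚ ((σ ^ (i : ℕ)) : K ≃ₐ[ℚ] K).toAlgHom α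
  have hKle : (Finset.univ : Finset (Fin n)).val.map (fun i : Fin n => (σ ^ (i.val)) α)
      ≤ ((minpoly ℚ α).map (algebraMap ℚ K)).roots := by
    apply (Multiset.le_iff_subset ?_).2
    · intro x hx
      obtain ⟨i, _, rfl⟩ := Multiset.mem_map.1 hx
      exact hroot i
    · exact (Finset.univ.nodup).map hdistinct
  have hdegle : n ≤ (minpoly ℚ α).natDegree := by
    calc n = Multiset.card ((Finset.univ : Finset (Fin n)).val.map (fun i : Fin n => (σ ^ (i.val)) α)) := by
          simp
      _ ≤ Multiset.card ((minpoly ℚ α).map (algebraMap ℚ K)).roots := Multiset.card_le_card hKle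
      _ ≤ ((minpoly ℚ α).map (algebraMap ℚ K)).natDegree := Polynomial.card_roots' _
      _ = (minpoly ℚ α).natDegree := Polynomial.natDegree_map _
  have hdeg : (minpoly ℚ α).natDegree = n :=
    le_antisymm (hfin ▸ minpoly.natDegree_le α) hdegle
  have hsplitsK : Splits ((minpoly ℚ α).map (algebraMap ℚ K)) := Normal.splits inferInstance α
  have hsplitsid : Splits ((minpoly ℚ α).map (algebraMap ℚ K)) :=
    hsplitsK
  have hcardroots : Multiset.card ((minpoly ℚ α).map (algebraMap ℚ K)).roots = n := by
    rw [Polynomial.splits_iff_card_roots.1 hsplitsid, Polynomial.natDegree_map, hdeg]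
  have hKroots : ((minpoly ℚ α).map (algebraMap ℚ K)).roots
      = (Finset.univ : Finset (Fin n)).val.map (fun i : Fin n => (σ ^ (i.val)) α) :=
    (Multiset.eq_of_le_of_card_le hKle (by simp [hcardroots])).symm
  -- push to ℂ
  have hmm : (minpoly ℚ α).map (algebraMap ℚ ℂ)
      = ((minpoly ℚ α).map (algebraMap ℚ K)).map (embC K).toRingHom := by
    rw [Polynomial.map_map]
    congr 1
  rw [hmm, hsplitsid.roots_map (embC K).toRingHom, hKroots, Multiset.map_map]
  rfl

end

lemma sum_Icc_split (h : ℤ → ℝ) (a b c : ℤ) (h1 : a - 1 ≤ c) (h2 : c ≤ b) :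
    ∑ k ∈ Finset.Icc a b, h k
      = ∑ k ∈ Finset.Icc a c, h k + ∑ k ∈ Finset.Icc (c+1) b, h k := by
  rw [← Finset.sum_union]
  · congr 1
    ext x
    simp only [Finset.mem_union, Finset.mem_Icc]
    omega
  · rw [Finset.disjoint_left]
    intro x hx hx'
    simp only [Finset.mem_Icc] at hx hx'
    omega

lemma sum_Icc_reflect (h : ℤ → ℝ) (a b c : ℤ) :
    ∑ k ∈ Finset.Icc a b, h (c - k) = ∑ k ∈ Finset.Icc (c - b) (c - a), h k := by
  refine Finset.sum_nbij' (fun k => c - k) (fun k => c - k) ?_ ?_ ?_ ?_ ?_ <;>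
    intro x hx <;> simp only [Finset.mem_Icc] at hx ⊢ <;> first | rfl | omega

lemma sum_Icc_shift (h : ℤ → ℝ) (a b d : ℤ) :
    ∑ k ∈ Finset.Icc a b, h (k + d) = ∑ k ∈ Finset.Icc (a + d) (b + d), h k := by
  refine Finset.sum_nbij' (fun k => k + d) (fun k => k - d) ?_ ?_ ?_ ?_ ?_ <;>
    intro x hx <;> simp only [Finset.mem_Icc] at hx ⊢ <;> first | rfl | omega

lemma sum_odd_zero (h : ℤ → ℝ) (hodd : ∀ j, h (-j) = - h j) (c : ℤ) :
    ∑ k ∈ Finset.Icc (-c) c, h k = 0 := by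
  have h2 := sum_Icc_reflect h (-c) c 0
  simp only [zero_sub, neg_neg] at h2
  have h3 : ∀ k ∈ Finset.Icc (-c) c, h (-k) = - h k := fun k _ => hodd k
  rw [Finset.sum_congr rfl h3, Finset.sum_neg_distrib] at h2
  linarith

lemma sum_skew_zero (h : ℤ → ℝ) (hodd : ∀ j, h (1 - j) = - h j) (c : ℤ) :
    ∑ k ∈ Finset.Icc (1 - c) c, h k = 0 := by
  have h2 := sum_Icc_reflect h (1 - c) c 1
  have e1 : (1 : ℤ) - c = 1 - c := rfl
  have e2 : (1 : ℤ) - (1 - c) = c := by ring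
  rw [e2] at h2
  have h3 : ∀ k ∈ Finset.Icc (1-c) c, h (1 - k) = - h k := fun k _ => hodd k
  rw [Finset.sum_congr rfl h3, Finset.sum_neg_distrib] at h2
  linarith

lemma sum_Icc_per (A : ℤ → ℝ) (N a b : ℤ) (hper : ∀ j, A (j + N) = A j) :
    ∑ k ∈ Finset.Icc a b, A k = ∑ k ∈ Finset.Icc (a - N) (b - N), A k := by
  have h := sum_Icc_shift A (a - N) (b - N) N
  have e : Finset.Icc (a - N + N) (b - N + N) = Finset.Icc a b := by congr 1 <;> ring
  rw [e] at h
  rw [← h]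
  exact Finset.sum_congr rfl (fun k _ => hper k)

section Core
variable (m : ℤ) (A : ℤ → ℝ)

/-- window sum -/
noncomputable def Wsum (j : ℤ) : ℝ := ∑ k ∈ Finset.Icc (j - m + 1) (j + m), A k

variable (hm : 2 ≤ m)
  (hper : ∀ j, A (j + (4*m-1)) = A j)
  (hH1 : ∀ i : ℤ, 0 ≤ i → i ≤ 2*m-2 → A (i+1) < A (-i))
  (hH2 : ∀ i : ℤ, 1 ≤ i → i ≤ 2*m-1 → A (-i) < A i)

-- difference of opposite windows as f-sum
lemma window_diff1 (i : ℤ) :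
    Wsum m A i - Wsum m A (-i-1) = ∑ k ∈ Finset.Icc (i-m+1) (i+m), (A k - A (-k)) := by
  have hrefl : Wsum m A (-i-1) = ∑ k ∈ Finset.Icc (i-m+1) (i+m), A (0 - k) := by
    rw [Wsum, sum_Icc_reflect A (i-m+1) (i+m) 0]
    congr 1 <;> ring
  rw [Wsum, hrefl, ← Finset.sum_sub_distrib]
  congr 1
  ext k
  rw [zero_sub]

lemma window_diff2 (i : ℤ) :
    Wsum m A (-i) - Wsum m A i = - ∑ k ∈ Finset.Icc (i-m+1) (i+m), (A k - A (1-k)) := by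
  have hrefl : Wsum m A (-i) = ∑ k ∈ Finset.Icc (i-m+1) (i+m), A (1 - k) := by
    rw [Wsum, sum_Icc_reflect A (i-m+1) (i+m) 1]
    congr 1 <;> ring
  rw [hrefl, Wsum, ← Finset.sum_sub_distrib, ← Finset.sum_neg_distrib]
  congr 1
  ext k
  ring

include hm hper hH1 hH2 in
lemma coreP1 (i : ℤ) (hi0 : 0 ≤ i) (hi : i ≤ 2*m-2) : Wsum m A (-i-1) < Wsum m A i := by
  set f : ℤ → ℝ := fun k => A k - A (-k) with hf
  have hodd : ∀ j, f (-j) = - f j := by intro j; simp only [hf, neg_neg]; ring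
  have hfpos : ∀ k, 1 ≤ k → k ≤ 2*m-1 → 0 < f k := by
    intro k h1 h2; have := hH2 k h1 h2; simp only [hf]; linarith
  have key : 0 < ∑ k ∈ Finset.Icc (i-m+1) (i+m), f k := by
    rcases le_or_gt i (m-1) with hc | hc
    · -- small i
      rw [sum_Icc_split f (i-m+1) (i+m) (m-1-i) (by omega) (by omega)]
      have hz : ∑ k ∈ Finset.Icc (i-m+1) (m-1-i), f k = 0 := by
        have : (i-m+1 : ℤ) = -(m-1-i) := by ring
        rw [this]
        exact sum_odd_zero f hodd (m-1-i)
      rw [hz, zero_add]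
      have hne : (m-1-i) + 1 ≤ i + m := by omega
      apply Finset.sum_pos
      · intro k hk
        simp only [Finset.mem_Icc] at hk
        exact hfpos k (by omega) (by omega)
      · exact Finset.nonempty_Icc.2 (by omega)
    · -- large i
      rw [sum_Icc_split f (i-m+1) (i+m) (2*m-1) (by omega) (by omega)]
      have hneg : ∑ k ∈ Finset.Icc (2*m-1+1) (i+m), f k
          = - ∑ k ∈ Finset.Icc (3*m-1-i) (2*m-1), f k := by
        have hpt : ∀ k ∈ Finset.Icc (2*m-1+1) (i+m), f k = - f ((4*m-1) - k) := by
          intro k hk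
          simp only [Finset.mem_Icc] at hk
          have e1 : A k = A (k - (4*m-1)) := by
            have := hper (k - (4*m-1)); rw [← this]; congr 1; ring
          have e2 : A (-k) = A ((4*m-1) - k) := by
            have := hper (-k); rw [← this]; congr 1; ring
          simp only [hf]
          rw [e1, e2]
          have e3 : (-((4*m-1) - k) : ℤ) = k - (4*m-1) := by ring
          rw [e3]
          ring
        rw [Finset.sum_congr rfl hpt, Finset.sum_neg_distrib]
        congr 1
        have := sum_Icc_reflect f (2*m-1+1) (i+m) (4*m-1)
        rw [this]
        congr 1 <;> ring
      rw [hneg]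
      rw [sum_Icc_split f (i-m+1) (2*m-1) (3*m-2-i) (by omega) (by omega)]
      have e4 : (3*m-2-i+1 : ℤ) = 3*m-1-i := by ring
      rw [e4]
      have hpos : 0 < ∑ k ∈ Finset.Icc (i-m+1) (3*m-2-i), f k := by
        apply Finset.sum_pos
        · intro k hk
          simp only [Finset.mem_Icc] at hk
          exact hfpos k (by omega) (by omega)
        · exact Finset.nonempty_Icc.2 (by omega)
      linarith
  have := window_diff1 m A i
  linarith

include hm hper hH1 in
lemma coreP2 (i : ℤ) (hi1 : 1 ≤ i) (hi : i ≤ 2*m-1) : Wsum m A i < Wsum m A (-i) := by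
  set g : ℤ → ℝ := fun k => A k - A (1-k) with hg
  have hskew : ∀ j, g (1-j) = - g j := by
    intro j; simp only [hg]
    have : (1 - (1 - j) : ℤ) = j := by ring
    rw [this]; ring
  have hgneg : ∀ k, 1 ≤ k → k ≤ 2*m-1 → g k < 0 := by
    intro k h1 h2
    have := hH1 (k-1) (by omega) (by omega)
    have e1 : (k - 1 + 1 : ℤ) = k := by ring
    have e2 : (-(k-1) : ℤ) = 1 - k := by ring
    rw [e1, e2] at this
    simp only [hg]; linarith
  have hg2m : g (2*m) = 0 := by
    simp only [hg]
    have := hper (1 - 2*m)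
    have e : (1 - 2*m + (4*m-1) : ℤ) = 2*m := by ring
    rw [e] at this
    rw [show (1 - 2*m : ℤ) = 1 - 2*m from rfl] at this
    have e2 : (1 - 2*m : ℤ) = 1 - 2*m := rfl
    rw [this]
    ring_nf
  have key : ∑ k ∈ Finset.Icc (i-m+1) (i+m), g k < 0 := by
    rcases le_or_gt i (m-1) with hc | hc
    · rw [sum_Icc_split g (i-m+1) (i+m) (m-i) (by omega) (by omega)]
      have hz : ∑ k ∈ Finset.Icc (i-m+1) (m-i), g k = 0 := by
        have e : (i-m+1 : ℤ) = 1 - (m-i) := by ring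
        rw [e]
        exact sum_skew_zero g hskew (m-i)
      rw [hz, zero_add]
      have : ∑ k ∈ Finset.Icc (m-i+1) (i+m), g k < 0 := by
        apply Finset.sum_neg
        · intro k hk
          simp only [Finset.mem_Icc] at hk
          exact hgneg k (by omega) (by omega)
        · exact Finset.nonempty_Icc.2 (by omega)
      linarith
    · rw [sum_Icc_split g (i-m+1) (i+m) (2*m-1) (by omega) (by omega)]
      have hsecond : ∑ k ∈ Finset.Icc (2*m-1+1) (i+m), g k
          = - ∑ k ∈ Finset.Icc (3*m-i) (2*m-1), g k := by
        rw [sum_Icc_split g (2*m-1+1) (i+m) (2*m) (by omega) (by omega)]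
        have e5 : Finset.Icc (2*m-1+1) (2*m) = {(2*m : ℤ)} := by
          have : (2*m-1+1 : ℤ) = 2*m := by ring
          rw [this, Finset.Icc_self]
        rw [e5, Finset.sum_singleton, hg2m, zero_add]
        have hpt : ∀ k ∈ Finset.Icc (2*m+1) (i+m), g k = - g ((4*m) - k) := by
          intro k hk
          simp only [Finset.mem_Icc] at hk
          have e1 : A k = A (k - (4*m-1)) := by
            have := hper (k - (4*m-1)); rw [← this]; congr 1; ring
          have e2 : A (1-k) = A ((4*m) - k) := by
            have := hper (1-k); rw [← this]; congr 1; ring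
          simp only [hg]
          rw [e1, e2]
          have e3 : (1 - ((4*m) - k) : ℤ) = k - (4*m-1) := by ring
          rw [e3]
          ring
        rw [Finset.sum_congr rfl hpt, Finset.sum_neg_distrib]
        congr 1
        rw [sum_Icc_reflect g (2*m+1) (i+m) (4*m)]
        congr 1 <;> ring
      rw [hsecond]
      rw [sum_Icc_split g (i-m+1) (2*m-1) (3*m-1-i) (by omega) (by omega)]
      have e4 : (3*m-1-i+1 : ℤ) = 3*m-i := by ring
      rw [e4]
      have hneg : ∑ k ∈ Finset.Icc (i-m+1) (3*m-1-i), g k < 0 := by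
        apply Finset.sum_neg
        · intro k hk
          simp only [Finset.mem_Icc] at hk
          exact hgneg k (by omega) (by omega)
        · exact Finset.nonempty_Icc.2 (by omega)
      linarith
  have := window_diff2 m A i
  linarith

include hm hper hH2 in
lemma coreP3 (hsum : ∑ k ∈ Finset.Icc (0:ℤ) (4*m-2), A k = 0) (hA0 : 0 < A 0) :
    0 < Wsum m A (m-1) := by
  have hW : Wsum m A (m-1) = ∑ k ∈ Finset.Icc (0:ℤ) (2*m-1), A k := by
    rw [Wsum]; congr 1 <;> ring
  have hsplit : ∑ k ∈ Finset.Icc (0:ℤ) (4*m-2), A k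
      = ∑ k ∈ Finset.Icc (0:ℤ) (2*m-1), A k + ∑ k ∈ Finset.Icc (2*m-1+1) (4*m-2), A k :=
    sum_Icc_split A 0 (4*m-2) (2*m-1) (by omega) (by omega)
  have htail : ∑ k ∈ Finset.Icc (2*m-1+1) (4*m-2), A k
      = ∑ k ∈ Finset.Icc (1:ℤ) (2*m-1), A (-k) := by
    rw [sum_Icc_per A (4*m-1) (2*m-1+1) (4*m-2) hper]
    have e0 : Finset.Icc (2*m-1+1-(4*m-1)) (4*m-2-(4*m-1)) = Finset.Icc (1-2*m) (-1:ℤ) := by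
      congr 1 <;> ring
    rw [e0]
    have h2 : ∑ k ∈ Finset.Icc (1:ℤ) (2*m-1), A (0 - k)
        = ∑ k ∈ Finset.Icc (1-2*m) (-1:ℤ), A k := by
      rw [sum_Icc_reflect A 1 (2*m-1) 0]
      congr 1 <;> ring
    rw [← h2]
    congr 1
    ext k
    rw [zero_sub]
  have hsplit2 : ∑ k ∈ Finset.Icc (0:ℤ) (2*m-1), A k
      = A 0 + ∑ k ∈ Finset.Icc (1:ℤ) (2*m-1), A k := by
    rw [sum_Icc_split A 0 (2*m-1) 0 (by omega) (by omega)]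
    simp
  have hfsum : 0 ≤ ∑ k ∈ Finset.Icc (1:ℤ) (2*m-1), (A k - A (-k)) := by
    apply Finset.sum_nonneg
    intro k hk
    simp only [Finset.mem_Icc] at hk
    have := hH2 k (by omega) (by omega)
    linarith
  rw [Finset.sum_sub_distrib] at hfsum
  -- Wsum = A0 + S1, and Wsum = -S2 where S2 = ∑ A(-k); 2W = A0 + (S1 - S2) > 0
  have hw2 : Wsum m A (m-1) = - ∑ k ∈ Finset.Icc (1:ℤ) (2*m-1), A (-k) := by
    rw [hW]; rw [hsplit, htail] at hsum; linarith
  have hw1 : Wsum m A (m-1) = A 0 + ∑ k ∈ Finset.Icc (1:ℤ) (2*m-1), A k := by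
    rw [hW, hsplit2]
  linarith

include hm hper hH1 in
lemma coreP4 (hsum : ∑ k ∈ Finset.Icc (0:ℤ) (4*m-2), A k = 0) (hA2m : A (2*m) ≤ 0) :
    Wsum m A m < 0 := by
  set g : ℤ → ℝ := fun k => A k - A (1-k) with hg
  have hgneg : ∀ k, 1 ≤ k → k ≤ 2*m-1 → g k < 0 := by
    intro k h1 h2
    have := hH1 (k-1) (by omega) (by omega)
    have e1 : (k - 1 + 1 : ℤ) = k := by ring
    have e2 : (-(k-1) : ℤ) = 1 - k := by ring
    rw [e1, e2] at this
    simp only [hg]; linarith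
  have hW : Wsum m A m = ∑ k ∈ Finset.Icc (1:ℤ) (2*m), A k := by
    rw [Wsum]; congr 1 <;> ring
  -- zero window Icc(1-2m, 2m-1)
  have hzero : ∑ k ∈ Finset.Icc (1-2*m) (2*m-1), A k = 0 := by
    have hsplit : ∑ k ∈ Finset.Icc (1-2*m) (2*m-1), A k
        = ∑ k ∈ Finset.Icc (1-2*m) (-1:ℤ), A k + ∑ k ∈ Finset.Icc (0:ℤ) (2*m-1), A k := by
      rw [sum_Icc_split A (1-2*m) (2*m-1) (-1) (by omega) (by omega)]
      norm_num
    have htail : ∑ k ∈ Finset.Icc (2*m-1+1) (4*m-2), A k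
        = ∑ k ∈ Finset.Icc (1-2*m) (-1:ℤ), A k := by
      rw [sum_Icc_per A (4*m-1) (2*m-1+1) (4*m-2) hper]
      congr 1 <;> ring
    have := sum_Icc_split A 0 (4*m-2) (2*m-1) (by omega) (by omega)
    rw [this, htail] at hsum
    linarith
  -- ∑_{Icc(1,2m)} g = 2 Wsum m - A(2m)
  have hrefl : ∑ k ∈ Finset.Icc (1:ℤ) (2*m), A (1-k) = ∑ k ∈ Finset.Icc (1-2*m) (0:ℤ), A k := by
    rw [sum_Icc_reflect A 1 (2*m) 1]
    congr 1 <;> ring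
  have hIcc0 : ∑ k ∈ Finset.Icc (1-2*m) (0:ℤ), A k
      = ∑ k ∈ Finset.Icc (1-2*m) (2*m-1), A k - ∑ k ∈ Finset.Icc (1:ℤ) (2*m-1), A k := by
    rw [sum_Icc_split A (1-2*m) (2*m-1) 0 (by omega) (by omega)]
    norm_num
  have hWtail : ∑ k ∈ Finset.Icc (1:ℤ) (2*m), A k
      = ∑ k ∈ Finset.Icc (1:ℤ) (2*m-1), A k + A (2*m) := by
    rw [sum_Icc_split A 1 (2*m) (2*m-1) (by omega) (by omega)]
    have e : Finset.Icc (2*m-1+1) (2*m) = {(2*m : ℤ)} := by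
      have : (2*m-1+1 : ℤ) = 2*m := by ring
      rw [this, Finset.Icc_self]
    rw [e, Finset.sum_singleton]
  have hg2m : g (2*m) = 0 := by
    simp only [hg]
    have := hper (1 - 2*m)
    have e : (1 - 2*m + (4*m-1) : ℤ) = 2*m := by ring
    rw [e] at this
    rw [this]
    ring_nf
  have hgsum : ∑ k ∈ Finset.Icc (1:ℤ) (2*m), g k
      = ∑ k ∈ Finset.Icc (1:ℤ) (2*m-1), g k + g (2*m) := by
    rw [sum_Icc_split g 1 (2*m) (2*m-1) (by omega) (by omega)]
    have e : Finset.Icc (2*m-1+1) (2*m) = {(2*m : ℤ)} := by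
      have : (2*m-1+1 : ℤ) = 2*m := by ring
      rw [this, Finset.Icc_self]
    rw [e, Finset.sum_singleton]
  have hgneg' : ∑ k ∈ Finset.Icc (1:ℤ) (2*m-1), g k < 0 := by
    apply Finset.sum_neg
    · intro k hk
      simp only [Finset.mem_Icc] at hk
      exact hgneg k (by omega) (by omega)
    · exact Finset.nonempty_Icc.2 (by omega)
  have hgdef : ∑ k ∈ Finset.Icc (1:ℤ) (2*m), g k
      = ∑ k ∈ Finset.Icc (1:ℤ) (2*m), A k - ∑ k ∈ Finset.Icc (1:ℤ) (2*m), A (1-k) := by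
    simp only [hg]
    rw [Finset.sum_sub_distrib]
  rw [hgsum, hg2m, add_zero] at hgdef
  rw [hrefl, hIcc0, hzero] at hgdef
  rw [hW]
  rw [hWtail] at hgdef ⊢
  linarith

include hm hper hH1 hH2 in
lemma coreMono (s t : ℤ) (hs : 0 ≤ s) (hst : s ≤ t) (ht : t ≤ 2*m-1) :
    Wsum m A t ≤ Wsum m A s := by
  have step : ∀ u : ℤ, 0 ≤ u → u ≤ 2*m-2 → Wsum m A (u+1) < Wsum m A u := by
    intro u hu0 hu
    have h1 := coreP1 m A hm hper hH1 hH2 u hu0 hu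
    have h2 := coreP2 m A hm hper hH1 (u+1) (by omega) (by omega)
    have e : (-(u+1) : ℤ) = -u-1 := by ring
    rw [e] at h2
    linarith
  -- induction
  have main : ∀ t : ℤ, s ≤ t → (t ≤ 2*m-1 → Wsum m A t ≤ Wsum m A s) := by
    refine Int.le_induction ?_ ?_
    · intro _; exact le_refl _
    · intro u hu ih h2
      have hstep := step u (by omega) (by omega)
      have := ih (by omega)
      linarith
  exact main t hst ht

include hm hper hH1 hH2 in
lemma corePos (hsum : ∑ k ∈ Finset.Icc (0:ℤ) (4*m-2), A k = 0) (hA0 : 0 < A 0)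
    (r : ℤ) (h1 : 1-m ≤ r) (h2 : r ≤ m-1) : 0 < Wsum m A r := by
  have hP3 := coreP3 m A hm hper hH2 hsum hA0
  rcases le_or_gt 0 r with hr | hr
  · have := coreMono m A hm hper hH1 hH2 r (m-1) hr (by omega) (by omega)
    linarith
  · have hs := coreP2 m A hm hper hH1 (-r) (by omega) (by omega)
    rw [neg_neg] at hs
    have := coreMono m A hm hper hH1 hH2 (-r) (m-1) (by omega) (by omega) (by omega)
    linarith

include hm hper hH1 hH2 in
lemma coreNeg (hsum : ∑ k ∈ Finset.Icc (0:ℤ) (4*m-2), A k = 0) (hA2m : A (2*m) ≤ 0)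
    (r : ℤ) (hcase : (m ≤ r ∧ r ≤ 2*m-1) ∨ (1-2*m ≤ r ∧ r ≤ -m-1)) : Wsum m A r < 0 := by
  have hP4 := coreP4 m A hm hper hH1 hsum hA2m
  rcases hcase with ⟨ha, hb⟩ | ⟨ha, hb⟩
  · have := coreMono m A hm hper hH1 hH2 m r (by omega) ha hb
    linarith
  · -- r = -s with m+1 ≤ s ≤ 2m-1
    have hs := coreP1 m A hm hper hH1 hH2 (-r-1) (by omega) (by omega)
    have e : (-(-r-1)-1 : ℤ) = r := by ring
    rw [e] at hs
    have := coreMono m A hm hper hH1 hH2 m (-r-1) (by omega) (by omega) (by omega)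
    linarith

end Core

section Chain
variable (m : ℤ) (A : ℤ → ℝ)

noncomputable def idxZ (p : ℤ) : ℤ := if p % 2 = 1 then (p+1)/2 else -(p/2)

noncomputable def rnk (r : ℤ) : ℤ := if 1 ≤ r then 2*r-1 else -2*r

lemma idxZ_rnk (r : ℤ) : idxZ (rnk r) = r := by
  rw [rnk, idxZ]
  rcases le_or_gt 1 r with h | h
  · rw [if_pos h, if_pos (by omega)]
    omega
  · rw [if_neg (by omega), if_neg (by omega)]
    omega

variable (hm : 2 ≤ m)
  (hH1 : ∀ i : ℤ, 0 ≤ i → i ≤ 2*m-2 → A (i+1) < A (-i))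
  (hH2 : ∀ i : ℤ, 1 ≤ i → i ≤ 2*m-1 → A (-i) < A i)

include hm hH1 hH2 in
lemma chainAdj (p : ℤ) (hp : 0 ≤ p) (hp2 : p + 1 ≤ 4*m-2) :
    A (idxZ (p+1)) < A (idxZ p) := by
  rcases Int.emod_two_eq p with h | h
  · -- p even
    have e1 : idxZ p = -(p/2) := by rw [idxZ, if_neg (by omega)]
    have e2 : idxZ (p+1) = p/2 + 1 := by rw [idxZ, if_pos (by omega)]; omega
    rw [e1, e2]
    exact hH1 (p/2) (by omega) (by omega)
  · -- p odd
    have e1 : idxZ p = (p+1)/2 := by rw [idxZ, if_pos (by omega)]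
    have e2 : idxZ (p+1) = -((p+1)/2) := by rw [idxZ, if_neg (by omega)]
    
    rw [e1, e2]
    exact hH2 ((p+1)/2) (by omega) (by omega)

include hm hH1 hH2 in
lemma chainStrict (p q : ℤ) (hp : 0 ≤ p) (hpq : p < q) (hq : q ≤ 4*m-2) :
    A (idxZ q) < A (idxZ p) := by
  have main : ∀ q : ℤ, p + 1 ≤ q → (q ≤ 4*m-2 → A (idxZ q) < A (idxZ p)) := by
    refine Int.le_induction ?_ ?_
    · intro h; exact chainAdj m A hm hH1 hH2 p hp (by omega)
    · intro u hu ih h2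
      have := chainAdj m A hm hH1 hH2 u (by omega) (by omega)
      have := ih (by omega)
      linarith
  exact main q (by omega) hq

include hm hH1 hH2 in
lemma rnkLt (r s : ℤ) (hr : 1-2*m ≤ r) (hr2 : r ≤ 2*m-1) (hs : 1-2*m ≤ s) (hs2 : s ≤ 2*m-1)
    (hlt : rnk r < rnk s) : A s < A r := by
  have h1 := idxZ_rnk r
  have h2 := idxZ_rnk s
  have := chainStrict m A hm hH1 hH2 (rnk r) (rnk s) (by rw [rnk]; split_ifs <;> omega)
    hlt (by rw [rnk]; split_ifs <;> omega)
  rw [h1, h2] at this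
  exact this

lemma rnk_inj (r s : ℤ) (h : rnk r = rnk s) : r = s := by
  rw [rnk, rnk] at h
  split_ifs at h <;> omega

lemma filter_rnk_le (c : ℤ) (hc : 0 ≤ c) (hc2 : c ≤ 4*m-2) :
    (Finset.Icc (1-2*m) (2*m-1)).filter (fun r => rnk r ≤ c)
      = Finset.Icc (-(c/2)) ((c+1)/2) := by
  ext r
  simp only [Finset.mem_filter, Finset.mem_Icc]; simp only [rnk]
  split_ifs <;> omega

include hm hH1 hH2 in
lemma coreTopSet
    (hcardA : ((Finset.Icc (1-2*m) (2*m-1)).filter (fun r => 0 < A r)).card = (2*m).toNat)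
    (r : ℤ) (hr : 1-2*m ≤ r) (hr2 : r ≤ 2*m-1) :
    0 < A r ↔ (1-m ≤ r ∧ r ≤ m) := by
  set F := (Finset.Icc (1-2*m) (2*m-1)).filter (fun r => 0 < A r) with hF
  constructor
  · intro hA
    by_contra hcon
    -- rnk r ≥ 2m
    have hrnk : 2*m ≤ rnk r := by rw [rnk]; split_ifs <;> omega
    have hsub : (Finset.Icc (1-2*m) (2*m-1)).filter (fun s => rnk s ≤ rnk r) ⊆ F := by
      intro s hs
      simp only [Finset.mem_filter, Finset.mem_Icc] at hs
      simp only [hF, Finset.mem_filter, Finset.mem_Icc]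
      refine ⟨⟨hs.1.1, hs.1.2⟩, ?_⟩
      rcases eq_or_lt_of_le hs.2 with he | hlt
      · rwa [rnk_inj s r he]
      · have := rnkLt m A hm hH1 hH2 s r hs.1.1 hs.1.2 hr hr2 hlt
        linarith
    have hcard2 := Finset.card_le_card hsub
    rw [filter_rnk_le, Int.card_Icc] at hcard2
    · rw [hcardA] at hcard2
      have hb : rnk r ≤ 4*m-2 := by rw [rnk]; split_ifs <;> omega
      omega
    · rw [rnk]; split_ifs <;> omega
    · rw [rnk]; split_ifs <;> omega
  · intro ⟨h1, h2⟩
    by_contra hA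
    push_neg at hA
    have hrnk : rnk r ≤ 2*m-1 := by rw [rnk]; split_ifs <;> omega
    have hsub : F ⊆ (Finset.Icc (1-2*m) (2*m-1)).filter (fun s => rnk s ≤ rnk r - 1) := by
      intro s hs
      simp only [hF, Finset.mem_filter, Finset.mem_Icc] at hs
      simp only [Finset.mem_filter, Finset.mem_Icc]
      refine ⟨⟨hs.1.1, hs.1.2⟩, ?_⟩
      by_contra hc
      push_neg at hc
      -- rnk s ≥ rnk r, so A s ≤ A r ≤ 0, contradicting 0 < A s
      rcases eq_or_lt_of_le (by omega : rnk r ≤ rnk s) with he | hlt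
      · have := rnk_inj r s he
        subst this
        linarith [hs.2]
      · have := rnkLt m A hm hH1 hH2 r s hr hr2 hs.1.1 hs.1.2 hlt
        linarith [hs.2]
    have hcard2 := Finset.card_le_card hsub
    rcases le_or_gt (rnk r) 0 with hz | hz
    · have hr0 : rnk r = 0 := le_antisymm hz (by rw [rnk]; split_ifs <;> omega)
      have hFe : F = ∅ := by
        ext s
        simp only [hF, Finset.mem_filter, Finset.mem_Icc, Finset.notMem_empty, iff_false,
          not_and]
        rintro ⟨hs1, hs2⟩ hs3
        have hrs : 0 ≤ rnk s := by rw [rnk]; split_ifs <;> omega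
        rcases eq_or_lt_of_le (show rnk r ≤ rnk s by omega) with he | hlt
        · have := rnk_inj r s he
          subst this
          linarith
        · have := rnkLt m A hm hH1 hH2 r s hr hr2 hs1 hs2 hlt
          linarith
      rw [hFe] at hcardA
      simp at hcardA
      omega
    · rw [filter_rnk_le, Int.card_Icc] at hcard2
      · rw [hcardA] at hcard2
        omega
      · omega
      · omega
end Chain

section Transfer
variable {n : ℕ} {m : ℤ}

def toRep (n : ℕ) (m : ℤ) (i : Fin n) : ℤ :=
  if ((i:ℕ):ℤ) ≤ 2*m-1 then ((i:ℕ):ℤ) else ((i:ℕ):ℤ) - n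

lemma card_transfer (hm : 2 ≤ m) (hnm : (n:ℤ) = 4*m-1)
    (P : Fin n → Prop) [DecidablePred P] (p : ℤ → Prop) [DecidablePred p]
    (hcompat : ∀ i : Fin n, P i ↔ p (toRep n m i)) :
    (Finset.univ.filter P).card = ((Finset.Icc (1-2*m) (2*m-1)).filter p).card := by
  have hn0 : 0 < n := by omega
  refine Finset.card_nbij' (toRep n m)
    (fun r => ⟨(if 0 ≤ r then r else r + n).toNat % n, Nat.mod_lt _ hn0⟩) ?_ ?_ ?_ ?_
  · intro a ha
    simp only [Finset.mem_coe, Finset.mem_filter, Finset.mem_univ, true_and] at ha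
    simp only [Finset.mem_coe, Finset.mem_filter, Finset.mem_Icc]
    have hlt : ((a:ℕ):ℤ) < (n:ℤ) := by exact_mod_cast a.isLt
    have h0 : (0:ℤ) ≤ ((a:ℕ):ℤ) := by positivity
    refine ⟨?_, (hcompat a).1 ha⟩
    rw [toRep]
    split_ifs <;> omega
  · intro r hr
    simp only [Finset.mem_coe, Finset.mem_filter, Finset.mem_Icc] at hr
    simp only [Finset.mem_coe, Finset.mem_filter, Finset.mem_univ, true_and]
    have h1 : (if 0 ≤ r then r else r + n).toNat % n = (if 0 ≤ r then r else r + n).toNat := by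
      apply Nat.mod_eq_of_lt
      rw [Int.toNat_lt' (by omega)]
      split_ifs <;> omega
    apply (hcompat _).2
    convert hr.2 using 2
    rw [toRep]
    simp only [h1]
    split_ifs <;> push_cast <;> omega
  · intro a ha
    have hlt : ((a:ℕ):ℤ) < (n:ℤ) := by exact_mod_cast a.isLt
    have h0 : (0:ℤ) ≤ ((a:ℕ):ℤ) := by positivity
    apply Fin.ext
    show (if 0 ≤ toRep n m a then toRep n m a else toRep n m a + n).toNat % n = (a:ℕ)
    have he : (if 0 ≤ toRep n m a then toRep n m a else toRep n m a + n) = ((a:ℕ):ℤ) := by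
      rw [toRep]; split_ifs <;> omega
    rw [he, Int.toNat_natCast]
    exact Nat.mod_eq_of_lt a.isLt
  · intro r hr
    simp only [Finset.mem_coe, Finset.mem_filter, Finset.mem_Icc] at hr
    have h1 : (if 0 ≤ r then r else r + n).toNat % n = (if 0 ≤ r then r else r + n).toNat := by
      apply Nat.mod_eq_of_lt
      rw [Int.toNat_lt' (by omega)]
      split_ifs <;> omega
    rw [toRep]
    simp only [h1]
    split_ifs <;> push_cast <;> omega
end Transfer

lemma prod_Icc_split {Kc : Type*} [CommMonoid Kc] (h : ℤ → Kc) (a b c : ℤ)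
    (h1 : a - 1 ≤ c) (h2 : c ≤ b) :
    ∏ k ∈ Finset.Icc a b, h k
      = (∏ k ∈ Finset.Icc a c, h k) * ∏ k ∈ Finset.Icc (c+1) b, h k := by
  rw [← Finset.prod_union]
  · congr 1
    ext x
    simp only [Finset.mem_union, Finset.mem_Icc]
    omega
  · rw [Finset.disjoint_left]
    intro x hx hx'
    simp only [Finset.mem_Icc] at hx hx'
    omega

lemma prod_Icc_shift {Kc : Type*} [CommMonoid Kc] (h : ℤ → Kc) (a b d : ℤ) :
    ∏ k ∈ Finset.Icc a b, h (k + d) = ∏ k ∈ Finset.Icc (a + d) (b + d), h k := by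
  refine Finset.prod_nbij' (fun k => k + d) (fun k => k - d) ?_ ?_ ?_ ?_ ?_ <;>
    intro x hx <;> simp only [Finset.mem_Icc] at hx ⊢ <;> first | rfl | omega

lemma prod_transfer {n : ℕ} {m : ℤ} (hm : 2 ≤ m) (hnm : (n:ℤ) = 4*m-1)
    (F : Fin n → ℝ) (f : ℤ → ℝ)
    (hcompat : ∀ i : Fin n, F i = f (toRep n m i)) :
    ∏ i : Fin n, F i = ∏ r ∈ Finset.Icc (1-2*m) (2*m-1), f r := by
  have hn0 : 0 < n := by omega
  refine Finset.prod_nbij' (toRep n m)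
    (fun r => ⟨(if 0 ≤ r then r else r + n).toNat % n, Nat.mod_lt _ hn0⟩) ?_ ?_ ?_ ?_ ?_
  · intro a ha
    simp only [Finset.mem_Icc]
    have hlt : ((a:ℕ):ℤ) < (n:ℤ) := by exact_mod_cast a.isLt
    have h0 : (0:ℤ) ≤ ((a:ℕ):ℤ) := by positivity
    rw [toRep]
    split_ifs <;> omega
  · intro r hr
    exact Finset.mem_univ _
  · intro a ha
    have hlt : ((a:ℕ):ℤ) < (n:ℤ) := by exact_mod_cast a.isLt
    have h0 : (0:ℤ) ≤ ((a:ℕ):ℤ) := by positivity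
    apply Fin.ext
    show (if 0 ≤ toRep n m a then toRep n m a else toRep n m a + n).toNat % n = (a:ℕ)
    have he : (if 0 ≤ toRep n m a then toRep n m a else toRep n m a + n) = ((a:ℕ):ℤ) := by
      rw [toRep]; split_ifs <;> omega
    rw [he, Int.toNat_natCast]
    exact Nat.mod_eq_of_lt a.isLt
  · intro r hr
    simp only [Finset.mem_Icc] at hr
    have h1 : (if 0 ≤ r then r else r + n).toNat % n = (if 0 ≤ r then r else r + n).toNat := by
      apply Nat.mod_eq_of_lt
      rw [Int.toNat_lt' (by omega)]
      split_ifs <;> omega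
    rw [toRep]
    simp only [h1]
    split_ifs <;> push_cast <;> omega
  · intro a ha
    exact hcompat a

end Aux

theorem cyclic_distribution_lemma_three_mod_four (n : ℕ) (hn5 : 5 ≤ n)
    (hn4 : n % 4 = 3)
    (K : IntermediateField ℚ ℝ) [FiniteDimensional ℚ K] [IsGalois ℚ K]
    (hcard : Nat.card (K ≃ₐ[ℚ] K) = n)
    (σ : K ≃ₐ[ℚ] K) (hσ : orderOf σ = n)
    (α : K) (hα0 : α ≠ 0) (hint : IsIntegral ℤ α) (hintinv : IsIntegral ℤ α⁻¹)
    (hdist1 : ∀ i : ℕ, i ≤ (n - 3) / 2 →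
      |(((σ ^ (-(i : ℤ))) α : K) : ℝ)| > |(((σ ^ ((i : ℤ) + 1)) α : K) : ℝ)|)
    (hdist2 : ∀ i : ℕ, 1 ≤ i → i ≤ (n - 1) / 2 →
      |(((σ ^ (i : ℤ)) α : K) : ℝ)| > |(((σ ^ (-(i : ℤ))) α : K) : ℝ)|)
    (hout : (Finset.univ.filter
        (fun i : Fin n => 1 < |(((σ ^ (i : ℕ)) α : K) : ℝ)|)).card = (n + 1) / 2) :
    ∃ b : K, |(b : ℝ)| = mahlerM (((α : K) : ℝ) : ℂ) ∧
      ((Finset.univ.filter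
          (fun i : Fin n => 1 < |(((σ ^ (i : ℕ)) b : K) : ℝ)|)).card = (n + 1) / 2 ∨
        (Finset.univ.filter
          (fun i : Fin n => 1 < |(((σ ^ (i : ℕ)) b : K) : ℝ)|)).card = (n - 1) / 2) ∧
      (∀ i : ℕ, i ≤ (n - 3) / 2 →
        |(((σ ^ (i : ℤ)) b : K) : ℝ)| > |(((σ ^ (-(i : ℤ) - 1)) b : K) : ℝ)|) ∧
      (∀ i : ℕ, 1 ≤ i → i ≤ (n - 1) / 2 →
        |(((σ ^ (-(i : ℤ))) b : K) : ℝ)| > |(((σ ^ (i : ℤ)) b : K) : ℝ)|) := by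
  classical
  have hM2 : 2 ≤ (n+1)/4 := by omega
  set M : ℕ := (n+1)/4 with hMdef
  set m : ℤ := (M:ℤ) with hmdef
  have hm : 2 ≤ m := by rw [hmdef]; exact_mod_cast hM2
  have hnm : (n:ℤ) = 4*m-1 := by simp only [hmdef, hMdef]; omega
  -- sigma facts
  have hσn : σ ^ ((n:ℕ):ℤ) = 1 := by
    rw [zpow_natCast, ← hσ]; exact pow_orderOf_eq_one σ
  have hperσ : ∀ j : ℤ, σ ^ (j + (4*m-1)) = σ ^ j := by
    intro j
    rw [← hnm, zpow_add, hσn, mul_one]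
  have habs : ∀ j : ℤ, 0 < |(((σ ^ j) α : K) : ℝ)| := by
    intro j
    have h1 : (σ ^ j) α ≠ 0 := by
      simp only [ne_eq, map_eq_zero_iff _ (AlgEquiv.injective _)]
      exact hα0
    have h2 : (((σ ^ j) α : K) : ℝ) ≠ 0 := by
      simpa using (Subtype.coe_injective.ne_iff' rfl).2 h1
    exact abs_pos.2 h2
  set A : ℤ → ℝ := fun j => Real.log |(((σ ^ j) α : K) : ℝ)| with hAdef
  have hper : ∀ j, A (j + (4*m-1)) = A j := by
    intro j; simp only [hAdef, hperσ j]
  have hH1 : ∀ i : ℤ, 0 ≤ i → i ≤ 2*m-2 → A (i+1) < A (-i) := by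
    intro i h0 h2
    obtain ⟨j, rfl⟩ : ∃ j : ℕ, (j:ℤ) = i := ⟨i.toNat, Int.toNat_of_nonneg h0⟩
    have hj : j ≤ (n-3)/2 := by omega
    have := hdist1 j hj
    simp only [hAdef]
    exact Real.log_lt_log (habs _) this
  have hH2 : ∀ i : ℤ, 1 ≤ i → i ≤ 2*m-1 → A (-i) < A i := by
    intro i h0 h2
    obtain ⟨j, rfl⟩ : ∃ j : ℕ, (j:ℤ) = i := ⟨i.toNat, Int.toNat_of_nonneg (by omega)⟩
    have hj : j ≤ (n-1)/2 := by omega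
    have := hdist2 j (by exact_mod_cast h0) hj
    simp only [hAdef]
    exact Real.log_lt_log (habs _) this
  have hsum : ∑ k ∈ Finset.Icc (0:ℤ) (4*m-2), A k = 0 := by
    set Q : K := ∏ k ∈ Finset.Icc (0:ℤ) (4*m-2), (σ ^ k) α with hQ
    have hQcoe : ((Q : K) : ℝ) = ∏ k ∈ Finset.Icc (0:ℤ) (4*m-2), (((σ ^ k) α : K) : ℝ) :=
      map_prod K.val _ _
    have hlog : ∑ k ∈ Finset.Icc (0:ℤ) (4*m-2), A k = Real.log |((Q : K) : ℝ)| := by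
      rw [hQcoe, Finset.abs_prod, Real.log_prod (fun k _ => (habs k).ne')]
    have hfix : σ Q = Q := by
      have h1 : σ Q = ∏ k ∈ Finset.Icc (0:ℤ) (4*m-2), (σ ^ (k+1)) α := by
        rw [hQ, map_prod]
        refine Finset.prod_congr rfl fun k _ => ?_
        rw [← AlgEquiv.mul_apply]
        congr 1
        group
      have h2 : ∏ k ∈ Finset.Icc (0:ℤ) (4*m-2), (σ ^ (k+1)) α
          = ∏ k ∈ Finset.Icc (1:ℤ) (4*m-1), (σ ^ k) α := by
        rw [prod_Icc_shift (fun k => (σ ^ k) α) 0 (4*m-2) 1]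
        congr 1
        ring
      have hlast : (σ ^ (4*m-1 : ℤ)) α = α := by
        have := hperσ 0
        rw [zero_add, zpow_zero] at this
        rw [this]
        rfl
      have h3 : ∏ k ∈ Finset.Icc (1:ℤ) (4*m-1), (σ ^ k) α
          = (∏ k ∈ Finset.Icc (1:ℤ) (4*m-2), (σ ^ k) α) * α := by
        rw [prod_Icc_split (fun k => (σ ^ k) α) 1 (4*m-1) (4*m-2) (by omega) (by omega)]
        congr 1
        have e : Finset.Icc (4*m-2+1 : ℤ) (4*m-1) = {(4*m-1 : ℤ)} := by
          have : (4*m-2+1 : ℤ) = 4*m-1 := by ring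
          rw [this, Finset.Icc_self]
        rw [e, Finset.prod_singleton, hlast]
      have h4 : Q = α * ∏ k ∈ Finset.Icc (1:ℤ) (4*m-2), (σ ^ k) α := by
        rw [hQ, prod_Icc_split (fun k => (σ ^ k) α) 0 (4*m-2) 0 (by omega) (by omega)]
        congr 1
        rw [show Finset.Icc (0:ℤ) 0 = {(0:ℤ)} from Finset.Icc_self 0, Finset.prod_singleton,
          zpow_zero]
        rfl
      rw [h1, h2, h3, mul_comm, ← h4]
    have hinvfix : σ⁻¹ Q = Q := by
      conv_lhs => rw [← hfix]
      rw [← AlgEquiv.mul_apply, inv_mul_cancel]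
      rfl
    have hfixall : ∀ g : K ≃ₐ[ℚ] K, g Q = Q := by
      have htop' : Subgroup.zpowers σ = ⊤ :=
        Subgroup.eq_top_of_card_eq _ (by rw [Nat.card_zpowers, hσ, hcard])
      intro g
      have hg : g ∈ Subgroup.zpowers σ := htop' ▸ Subgroup.mem_top g
      obtain ⟨z, rfl⟩ := Subgroup.mem_zpowers_iff.1 hg
      induction z using Int.induction_on with
      | zero => rw [zpow_zero]; rfl
      | succ p ih => rw [zpow_add_one, AlgEquiv.mul_apply, hfix, ih (Subgroup.zpow_mem _ (Subgroup.mem_zpowers σ) _)]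
      | pred p ih => rw [zpow_sub_one, AlgEquiv.mul_apply, hinvfix, ih (Subgroup.zpow_mem _ (Subgroup.mem_zpowers σ) _)]
    have hbot : Q ∈ (⊥ : IntermediateField ℚ K) := by
      rw [← IsGalois.fixedField_fixingSubgroup (⊥ : IntermediateField ℚ K)]
      intro g
      exact hfixall g
    obtain ⟨q, hq⟩ := IntermediateField.mem_bot.1 hbot
    have hQ0 : Q ≠ 0 := by
      rw [hQ]
      apply Finset.prod_ne_zero_iff.2
      intro k _
      simp only [ne_eq, map_eq_zero_iff _ (AlgEquiv.injective _)]
      exact hα0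
    have hq0 : q ≠ 0 := by
      intro h
      rw [h, map_zero] at hq
      exact hQ0 hq.symm
    have hQint : IsIntegral ℤ Q := by
      rw [hQ]
      apply IsIntegral.prod
      intro k _
      exact IsIntegral.map (σ ^ k : K ≃ₐ[ℚ] K) hint
    have hQinvint : IsIntegral ℤ Q⁻¹ := by
      have : Q⁻¹ = ∏ k ∈ Finset.Icc (0:ℤ) (4*m-2), (σ ^ k) α⁻¹ := by
        rw [hQ, ← Finset.prod_inv_distrib]
        exact Finset.prod_congr rfl fun k _ => (map_inv₀ (σ ^ k : K ≃ₐ[ℚ] K) α).symm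
      rw [this]
      apply IsIntegral.prod
      intro k _
      exact IsIntegral.map (σ ^ k : K ≃ₐ[ℚ] K) hintinv
    have hqint : IsIntegral ℤ q := by
      rw [← isIntegral_algebraMap_iff (algebraMap ℚ K).injective, hq]
      exact hQint
    have hqinvint : IsIntegral ℤ q⁻¹ := by
      rw [← isIntegral_algebraMap_iff (algebraMap ℚ K).injective, map_inv₀, hq]
      exact hQinvint
    obtain ⟨z, hz⟩ := IsIntegrallyClosed.isIntegral_iff.1 hqint
    obtain ⟨w, hw⟩ := IsIntegrallyClosed.isIntegral_iff.1 hqinvint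
    have hzw : z * w = 1 := by
      have : (z : ℚ) * (w : ℚ) = 1 := by
        rw [show ((z:ℚ)) = q from by exact_mod_cast hz, show ((w:ℚ)) = q⁻¹ from by
          exact_mod_cast hw]
        field_simp
      exact_mod_cast this
    have hzpm : z = 1 ∨ z = -1 := Int.isUnit_iff.1 (IsUnit.of_mul_eq_one (a := z) w hzw)
    have hQR : ((Q : K) : ℝ) = (q : ℝ) := by
      rw [← hq]
      have := K.val.commutes q
      simpa using this
    have habsQ : |((Q : K) : ℝ)| = 1 := by
      rw [hQR]
      have hqz : q = (z:ℚ) := by exact_mod_cast hz.symm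
      rcases hzpm with h | h <;> rw [hqz, h] <;> norm_num
    rw [hlog, habsQ, Real.log_one]
  have hcompatA : ∀ i : Fin n, (1 < |(((σ ^ (i:ℕ)) α : K) : ℝ)|) ↔ 0 < A (toRep n m i) := by
    intro i
    have e1 : A (toRep n m i) = A ((i:ℕ):ℤ) := by
      rw [toRep]
      split_ifs with h
      · rfl
      · have hp := hper (((i:ℕ):ℤ) - n)
        have e : (((i:ℕ):ℤ) - n + (4*m-1) : ℤ) = ((i:ℕ):ℤ) := by omega
        rw [e] at hp
        exact hp.symm
    have e0 : (σ ^ ((i:ℕ))) α = (σ ^ (((i:ℕ):ℤ))) α := by rw [zpow_natCast]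
    rw [e1, e0, hAdef]
    exact (Real.log_pos_iff (habs _).le).symm
  have hcardA : ((Finset.Icc (1-2*m) (2*m-1)).filter (fun r => 0 < A r)).card = (2*m).toNat := by
    have h2 := card_transfer hm hnm (fun i : Fin n => 1 < |(((σ ^ (i:ℕ)) α : K) : ℝ)|)
      (fun r => 0 < A r) hcompatA
    rw [hout] at h2
    rw [← h2]
    omega
  have htop : ∀ r : ℤ, 1-2*m ≤ r → r ≤ 2*m-1 → (0 < A r ↔ (1-m ≤ r ∧ r ≤ m)) :=
    coreTopSet m A hm hH1 hH2 hcardA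
  have hA0 : 0 < A 0 := (htop 0 (by omega) (by omega)).2 ⟨by omega, by omega⟩
  have hA2m : A (2*m) ≤ 0 := by
    have he : A (2*m) = A (1-2*m) := by
      have := hper (1-2*m)
      have e : (1-2*m + (4*m-1) : ℤ) = 2*m := by ring
      rw [e] at this
      exact this
    rw [he]
    by_contra hc
    push_neg at hc
    have := (htop (1-2*m) (by omega) (by omega)).1 hc
    omega
  set b : K := ∏ k ∈ Finset.Icc (1-m) m, (σ ^ k) α with hbdef
  have hσb : ∀ j : ℤ, (σ ^ j) b = ∏ k ∈ Finset.Icc (1-m) m, (σ ^ (j+k)) α := by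
    intro j
    rw [hbdef, map_prod]
    exact Finset.prod_congr rfl (fun k _ => by rw [← AlgEquiv.mul_apply, ← zpow_add])
  have hWB : ∀ j : ℤ, Real.log |(((σ ^ j) b : K) : ℝ)| = Wsum m A j := by
    intro j
    rw [hσb j]
    have hcoe : ((↑(∏ k ∈ Finset.Icc (1-m) m, (σ ^ (j+k)) α) : ℝ))
        = ∏ k ∈ Finset.Icc (1-m) m, (((σ ^ (j+k)) α : K) : ℝ) := by
      exact map_prod K.val _ _
    rw [hcoe, Finset.abs_prod, Real.log_prod (fun k _ => (abs_pos.2 ?_).ne')]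
    · have h1 : ∀ k ∈ Finset.Icc (1-m) m, Real.log |(((σ ^ (j+k)) α : K) : ℝ)| = A (k + j) := by
        intro k _
        simp only [hAdef]
        congr 2
        ring
      rw [Finset.sum_congr rfl h1, sum_Icc_shift (fun k => A k) (1-m) m j, Wsum]
      congr 1 <;> ring
    · intro hz
      exact absurd (by simpa using hz) (by simpa using ((habs (j+k)).ne').symm ∘ Eq.symm)
  have hbabs : ∀ j : ℤ, 0 < |(((σ ^ j) b : K) : ℝ)| := by
    intro j
    rw [hσb j]
    rw [show ((↑(∏ k ∈ Finset.Icc (1-m) m, (σ ^ (j+k)) α) : ℝ))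
        = ∏ k ∈ Finset.Icc (1-m) m, (((σ ^ (j+k)) α : K) : ℝ) from map_prod K.val _ _,
      Finset.abs_prod]
    exact Finset.prod_pos (fun k _ => habs (j+k))
  have hσper2 : ∀ i : Fin n, (σ ^ (toRep n m i)) = (σ ^ ((i:ℕ)) : K ≃ₐ[ℚ] K) := by
    intro i
    rw [toRep]
    split_ifs with h
    · rw [zpow_natCast]
    · have := hperσ (((i:ℕ):ℤ) - n)
      have e : (((i:ℕ):ℤ) - n + (4*m-1) : ℤ) = ((i:ℕ):ℤ) := by omega
      rw [e] at this
      rw [← this, zpow_natCast]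
  refine ⟨b, ?_, ?_, ?_, ?_⟩
  · -- Mahler measure
    have hintC : IsIntegral ℤ ((((α : K) : ℝ) : ℂ)) := by
      have := IsIntegral.map (embC K) hint
      rwa [embC_apply] at this
    rw [mahlerM_eq_roots _ hintC, minpoly_embC α]
    have hinj : Function.Injective (fun i : Fin n => (σ ^ (i.val)) α) := by
      intro i j hij
      by_contra hne
      have hrep : toRep n m i ≠ toRep n m j := by
        rw [toRep, toRep]
        have hi : ((i:ℕ):ℤ) < (n:ℤ) := by exact_mod_cast i.isLt
        have hj : ((j:ℕ):ℤ) < (n:ℤ) := by exact_mod_cast j.isLt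
        have hne' : ((i:ℕ):ℤ) ≠ ((j:ℕ):ℤ) := by
          simp only [ne_eq, Int.natCast_inj]
          exact fun h => hne (Fin.ext h)
        split_ifs <;> omega
      have hAeq : A (toRep n m i) = A (toRep n m j) := by
        have e1 : (σ ^ (toRep n m i)) α = (σ ^ (toRep n m j)) α := by
          rw [hσper2 i, hσper2 j]
          exact hij
        simp only [hAdef, e1]
      have hbnd : ∀ k : Fin n, 1-2*m ≤ toRep n m k ∧ toRep n m k ≤ 2*m-1 := by
        intro k
        have hk : ((k:ℕ):ℤ) < (n:ℤ) := by exact_mod_cast k.isLt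
        have h0 : (0:ℤ) ≤ ((k:ℕ):ℤ) := by positivity
        rw [toRep]
        split_ifs <;> omega
      have hrnk : rnk (toRep n m i) ≠ rnk (toRep n m j) :=
        fun h => hrep (rnk_inj _ _ h)
      rcases lt_or_gt_of_ne hrnk with hlt | hlt
      · have := rnkLt m A hm hH1 hH2 _ _ (hbnd i).1 (hbnd i).2 (hbnd j).1 (hbnd j).2 hlt
        linarith [hAeq.le]
      · have := rnkLt m A hm hH1 hH2 _ _ (hbnd j).1 (hbnd j).2 (hbnd i).1 (hbnd i).2 hlt
        linarith [hAeq.le]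
    rw [conj_roots (by omega) hcard σ α hinj, Multiset.map_map]
    have hprodform : ((Finset.univ : Finset (Fin n)).val.map
        ((fun z => max 1 ‖z‖) ∘ (fun i : Fin n => ((((σ ^ (i.val)) α : K) : ℝ) : ℂ)))).prod
        = ∏ i : Fin n, max 1 |(((σ ^ (i.val)) α : K) : ℝ)| := by
      rw [Finset.prod]
      congr 1
      apply Multiset.map_congr rfl
      intro i _
      simp only [Function.comp_apply, Complex.norm_real, Real.norm_eq_abs]
    rw [hprodform]
    have htrans : ∏ i : Fin n, max 1 |(((σ ^ (i.val)) α : K) : ℝ)|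
        = ∏ r ∈ Finset.Icc (1-2*m) (2*m-1), max 1 |(((σ ^ r) α : K) : ℝ)| := by
      apply prod_transfer hm hnm
      intro i
      rw [hσper2 i]
    rw [htrans]
    have hsplit : ∏ r ∈ Finset.Icc (1-2*m) (2*m-1), max 1 |(((σ ^ r) α : K) : ℝ)|
        = (∏ r ∈ Finset.Icc (1-2*m) (-m), max 1 |(((σ ^ r) α : K) : ℝ)|)
          * ((∏ r ∈ Finset.Icc (1-m) m, max 1 |(((σ ^ r) α : K) : ℝ)|)
          * ∏ r ∈ Finset.Icc (m+1) (2*m-1), max 1 |(((σ ^ r) α : K) : ℝ)|) := by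
      rw [prod_Icc_split _ (1-2*m) (2*m-1) (-m) (by omega) (by omega)]
      have e : (-m+1:ℤ) = 1-m := by ring
      rw [e, prod_Icc_split _ (1-m) (2*m-1) m (by omega) (by omega)]
    rw [hsplit]
    have hone : ∀ r : ℤ, 1-2*m ≤ r → r ≤ 2*m-1 → (r ≤ -m ∨ m+1 ≤ r) →
        max 1 |(((σ ^ r) α : K) : ℝ)| = 1 := by
      intro r h1 h2 h3
      apply max_eq_left
      have hA : ¬ (0 < A r) := by
        intro hc
        have := (htop r h1 h2).1 hc
        omega
      push_neg at hA
      have := (Real.log_nonpos_iff (habs r).le).1 hA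
      linarith [this]
    have hleft : ∏ r ∈ Finset.Icc (1-2*m) (-m), max 1 |(((σ ^ r) α : K) : ℝ)| = 1 := by
      apply Finset.prod_eq_one
      intro r hr
      simp only [Finset.mem_Icc] at hr
      exact hone r (by omega) (by omega) (by omega)
    have hright : ∏ r ∈ Finset.Icc (m+1) (2*m-1), max 1 |(((σ ^ r) α : K) : ℝ)| = 1 := by
      apply Finset.prod_eq_one
      intro r hr
      simp only [Finset.mem_Icc] at hr
      exact hone r (by omega) (by omega) (by omega)
    have hmid : ∏ r ∈ Finset.Icc (1-m) m, max 1 |(((σ ^ r) α : K) : ℝ)|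
        = ∏ r ∈ Finset.Icc (1-m) m, |(((σ ^ r) α : K) : ℝ)| := by
      apply Finset.prod_congr rfl
      intro r hr
      simp only [Finset.mem_Icc] at hr
      apply max_eq_right
      have hA : 0 < A r := (htop r (by omega) (by omega)).2 ⟨hr.1, hr.2⟩
      have := (Real.log_pos_iff (habs r).le).1 hA
      linarith
    rw [hleft, hright, hmid, one_mul, mul_one]
    rw [hbdef]
    rw [show ((↑(∏ k ∈ Finset.Icc (1-m) m, (σ ^ k) α) : ℝ))
        = ∏ k ∈ Finset.Icc (1-m) m, (((σ ^ k) α : K) : ℝ) from map_prod K.val _ _,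
      Finset.abs_prod]
  · -- count
    have hcompatB : ∀ i : Fin n, (1 < |(((σ ^ (i:ℕ)) b : K) : ℝ)|)
        ↔ 0 < Wsum m A (toRep n m i) := by
      intro i
      rw [← hWB (toRep n m i), hσper2 i]
      have hb1 : 0 < |(((σ ^ ((i:ℕ))) b : K) : ℝ)| := by
        have := hbabs ((i:ℕ):ℤ)
        rwa [zpow_natCast] at this
      exact (Real.log_pos_iff hb1.le).symm
    have h2 := card_transfer hm hnm (fun i : Fin n => 1 < |(((σ ^ (i:ℕ)) b : K) : ℝ)|)
      (fun r => 0 < Wsum m A r) hcompatB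
    rw [h2]
    by_cases hneg : 0 < Wsum m A (-m)
    · left
      have hfeq : (Finset.Icc (1-2*m) (2*m-1)).filter (fun r => 0 < Wsum m A r)
          = Finset.Icc (-m) (m-1) := by
        ext r
        simp only [Finset.mem_filter, Finset.mem_Icc]
        constructor
        · rintro ⟨⟨h1, h2⟩, h3⟩
          by_contra hc
          push_neg at hc
          have : Wsum m A r < 0 := by
            apply coreNeg m A hm hper hH1 hH2 hsum hA2m
            omega
          linarith
        · rintro ⟨h1, h2⟩
          refine ⟨⟨by omega, by omega⟩, ?_⟩
          rcases eq_or_lt_of_le h1 with he | hlt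
          · rw [← he]; exact hneg
          · exact corePos m A hm hper hH1 hH2 hsum hA0 r (by omega) (by omega)
      rw [hfeq, Int.card_Icc]
      omega
    · right
      have hfeq : (Finset.Icc (1-2*m) (2*m-1)).filter (fun r => 0 < Wsum m A r)
          = Finset.Icc (1-m) (m-1) := by
        ext r
        simp only [Finset.mem_filter, Finset.mem_Icc]
        constructor
        · rintro ⟨⟨h1, h2⟩, h3⟩
          constructor
          · by_contra hc
            push_neg at hc
            rcases eq_or_lt_of_le (by omega : r ≤ -m) with he | hlt
            · exact hneg (he ▸ h3)
            · have : Wsum m A r < 0 := by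
                apply coreNeg m A hm hper hH1 hH2 hsum hA2m
                omega
              linarith
          · by_contra hc
            push_neg at hc
            have : Wsum m A r < 0 := by
              apply coreNeg m A hm hper hH1 hH2 hsum hA2m
              omega
            linarith
        · rintro ⟨h1, h2⟩
          exact ⟨⟨by omega, by omega⟩,
            corePos m A hm hper hH1 hH2 hsum hA0 r (by omega) (by omega)⟩
      rw [hfeq, Int.card_Icc]
      omega
  · -- third conclusion
    intro i hi
    have h1 := coreP1 m A hm hper hH1 hH2 (i:ℤ) (by positivity) (by omega)
    have e1 := hWB (i:ℤ)
    have e2 := hWB (-(i:ℤ)-1)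
    have := h1
    rw [← e1, ← e2] at this
    exact (Real.log_lt_log_iff (hbabs _) (hbabs _)).1 this
  · -- fourth conclusion
    intro i hi1 hi2
    have h1 := coreP2 m A hm hper hH1 (i:ℤ) (by exact_mod_cast hi1) (by omega)
    have e1 := hWB (i:ℤ)
    have e2 := hWB (-(i:ℤ))
    have := h1
    rw [← e1, ← e2] at this
    exact (Real.log_lt_log_iff (hbabs _) (hbabs _)).1 this
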